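/- For all 1 ≤ p ≤ l ≤ K, assuming each rational number (ĉ_l^+, d_{(j)}·c_j)_{D_0R} (1 ≤ j ≤ l) is an integer: q^{(p)}(ŷ^{c_l^+}) = ŷ^{c_l^+}·∏_{j=1}^{p} L_j^{−(ĉ_l^+, d_{(j)}·c_j)_{D_0R}}. -/

import Mathlib

noncomputable section

/-- Variables of the ambient field of a generalized cluster algebra of rank `n` with
mutation degrees `r`: cluster variables `x_i`, coefficients `y_i`, and `z_{i,s}` for
`1 ≤ s ≤ r_i - 1` (encoded by `Fin (r i - 1)`, the variable `z i t` standing for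
`z_{i, t+1}`). -/
inductive GVar (n : ℕ) (r : Fin n → ℕ) : Type where
  | x : Fin n → GVar n r
  | y : Fin n → GVar n r
  | z : (i : Fin n) → Fin (r i - 1) → GVar n r

/-- The ambient field: rational functions over `ℚ` in the variables `GVar n r`. -/
abbrev GF (n : ℕ) (r : Fin n → ℕ) : Type := FractionRing (MvPolynomial (GVar n r) ℚ)

/-- The variable `x_i` as an element of the field `GF n r`. -/
def Xv {n : ℕ} {r : Fin n → ℕ} (i : Fin n) : GF n r :=
  algebraMap (MvPolynomial (GVar n r) ℚ) (GF n r) (MvPolynomial.X (GVar.x i))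

/-- The variable `y_i` as an element of the field `GF n r`. -/
def Yv {n : ℕ} {r : Fin n → ℕ} (i : Fin n) : GF n r :=
  algebraMap (MvPolynomial (GVar n r) ℚ) (GF n r) (MvPolynomial.X (GVar.y i))

/-- The variable `z_{i,s+1}` (for `s : Fin (r i - 1)`) as an element of `GF n r`. -/
def Zv {n : ℕ} {r : Fin n → ℕ} (i : Fin n) (s : Fin (r i - 1)) : GF n r :=
  algebraMap (MvPolynomial (GVar n r) ℚ) (GF n r) (MvPolynomial.X (GVar.z i s))

/-- A rational constant as an element of `GF n r`. -/
def Qc {n : ℕ} {r : Fin n → ℕ} (a : ℚ) : GF n r :=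
  algebraMap (MvPolynomial (GVar n r) ℚ) (GF n r) (MvPolynomial.C a)

/-- `z_{i,s}` for `0 ≤ s ≤ r i`, with the convention `z_{i,0} = z_{i,r_i} = 1`. -/
def Zc {n : ℕ} (r : Fin n → ℕ) (i : Fin n) (s : ℕ) : GF n r :=
  if h : 0 < s ∧ s < r i then Zv i ⟨s - 1, by omega⟩ else 1

/-- `x^v = ∏ x_i^{v_i}` for `v ∈ ℤ^n`. -/
def xpow {n : ℕ} (r : Fin n → ℕ) (v : Fin n → ℤ) : GF n r :=
  ∏ i, Xv (r := r) i ^ v i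

/-- `ŷ_i = y_i·∏_j x_j^{b_{ji}}`. -/
def yhat {n : ℕ} (r : Fin n → ℕ) (B : Matrix (Fin n) (Fin n) ℤ) (i : Fin n) : GF n r :=
  Yv i * ∏ j, Xv (r := r) j ^ B j i

/-- `ŷ^v = ∏ ŷ_i^{v_i}` for `v ∈ ℤ^n`. -/
def yhatpow {n : ℕ} (r : Fin n → ℕ) (B : Matrix (Fin n) (Fin n) ℤ) (v : Fin n → ℤ) :
    GF n r :=
  ∏ i, yhat r B i ^ v i

section Aux
variable {n : ℕ} {r : Fin n → ℕ}

lemma algMap_injective :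
    Function.Injective (algebraMap (MvPolynomial (GVar n r) ℚ) (GF n r)) :=
  IsFractionRing.injective _ _

lemma Xv_ne_zero (i : Fin n) : (Xv i : GF n r) ≠ 0 :=
  (map_ne_zero_iff _ algMap_injective).mpr (MvPolynomial.X_ne_zero _)

lemma Yv_ne_zero (i : Fin n) : (Yv i : GF n r) ≠ 0 :=
  (map_ne_zero_iff _ algMap_injective).mpr (MvPolynomial.X_ne_zero _)

lemma zpow_sum₀ {G₀ : Type*} [CommGroupWithZero G₀] {a : G₀} (ha : a ≠ 0) {ι : Type*}
    (s : Finset ι) (f : ι → ℤ) : a ^ (∑ i ∈ s, f i) = ∏ i ∈ s, a ^ f i := by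
  classical
  induction s using Finset.induction_on with
  | empty => simp
  | @insert a s h ih => rw [Finset.sum_insert h, Finset.prod_insert h, zpow_add₀ ha, ih]

lemma mulVec_apply (B : Matrix (Fin n) (Fin n) ℤ) (v : Fin n → ℤ) (j : Fin n) :
    B.mulVec v j = ∑ i, B j i * v i := by
  simp [Matrix.mulVec, dotProduct]

lemma yhatpow_eq (B : Matrix (Fin n) (Fin n) ℤ) (v : Fin n → ℤ) :
    yhatpow r B v = (∏ i, Yv (r := r) i ^ v i) * ∏ j, Xv (r := r) j ^ (B.mulVec v j) := by
  unfold yhatpow yhat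
  calc ∏ i, (Yv (r := r) i * ∏ j, Xv (r := r) j ^ B j i) ^ v i
      = ∏ i, (Yv (r := r) i ^ v i * ∏ j, Xv (r := r) j ^ (B j i * v i)) := by
        refine Finset.prod_congr rfl fun i _ => ?_
        rw [mul_zpow, ← Finset.prod_zpow]
        congr 1
        exact Finset.prod_congr rfl fun j _ => (zpow_mul _ _ _).symm
    _ = (∏ i, Yv (r := r) i ^ v i) * ∏ i, ∏ j, Xv (r := r) j ^ (B j i * v i) :=
        Finset.prod_mul_distrib
    _ = _ := by
        rw [Finset.prod_comm]
        congr 1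
        refine Finset.prod_congr rfl fun j _ => ?_
        rw [mulVec_apply, zpow_sum₀ (Xv_ne_zero j)]

end Aux

section Aux2
variable {n : ℕ} {r : Fin n → ℕ}

def Zp (r : Fin n → ℕ) (k : Fin n) (s : ℕ) : MvPolynomial (GVar n r) ℚ :=
  if h : 0 < s ∧ s < r k then MvPolynomial.X (GVar.z k ⟨s - 1, by omega⟩) else 1

lemma Zc_eq (k : Fin n) (s : ℕ) :
    Zc r k s = algebraMap (MvPolynomial (GVar n r) ℚ) (GF n r) (Zp r k s) := by
  unfold Zc Zp
  split
  · rfl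
  · rw [map_one]

lemma algX_pow_toNat (g : GVar n r) (m : ℤ) (hm : 0 ≤ m) :
    algebraMap (MvPolynomial (GVar n r) ℚ) (GF n r) (MvPolynomial.X g ^ m.toNat)
      = (algebraMap (MvPolynomial (GVar n r) ℚ) (GF n r) (MvPolynomial.X g)) ^ m := by
  rw [map_pow, ← zpow_natCast, Int.toNat_of_nonneg hm]

def evalF (n : ℕ) (r : Fin n → ℕ) : GVar n r → ℚ
  | GVar.x _ => 1
  | GVar.y _ => 0
  | GVar.z _ _ => 0

lemma sumP_ne_zero (B : Matrix (Fin n) (Fin n) ℤ) (k : Fin n) (hrk : 0 < r k)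
    (v : Fin n → ℤ) (hv0 : ∀ i, 0 ≤ v i) (i₀ : Fin n) (hi₀ : v i₀ ≠ 0) :
    (∑ s ∈ Finset.range (r k + 1), Zc r k s * yhatpow r B v ^ s) ≠ 0 := by
  classical
  set R := r k with hR
  set w : Fin n → ℤ := B.mulVec v with hw
  set N : Fin n → ℕ := fun j => R * (-(w j)).toNat with hN
  have hNE : ∀ s ∈ Finset.range (R + 1), ∀ j, (0 : ℤ) ≤ (N j : ℤ) + s * w j := by
    intro s hs j
    have hs' : (s : ℤ) ≤ (R : ℤ) := by
      have := Finset.mem_range.mp hs; omega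
    rcases le_or_gt 0 (w j) with h | h
    · have h1 : (0 : ℤ) ≤ (s : ℤ) * w j := mul_nonneg (by positivity) h
      have h2 : (0 : ℤ) ≤ (N j : ℤ) := Int.natCast_nonneg _
      omega
    · have hNj : (N j : ℤ) = (R : ℤ) * (-(w j)) := by
        have h3 : (((-(w j)).toNat : ℤ)) = -(w j) := Int.toNat_of_nonneg (by omega)
        simp only [hN]
        push_cast [h3]
        ring
      have h4 : (0 : ℤ) ≤ ((R : ℤ) - s) * (-(w j)) :=
        mul_nonneg (by omega) (by omega)
      nlinarith [h4]
  set A : MvPolynomial (GVar n r) ℚ :=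
    ∑ s ∈ Finset.range (R + 1), Zp r k s *
      (∏ i, MvPolynomial.X (GVar.y i) ^ ((s : ℤ) * v i).toNat) *
      (∏ j, MvPolynomial.X (GVar.x j) ^ ((N j : ℤ) + s * w j).toNat) with hA
  have claim1 : algebraMap (MvPolynomial (GVar n r) ℚ) (GF n r) A
      = (∏ j, Xv (r := r) j ^ (N j : ℤ)) *
        ∑ s ∈ Finset.range (R + 1), Zc r k s * yhatpow r B v ^ s := by
    rw [hA, map_sum, Finset.mul_sum]
    refine Finset.sum_congr rfl fun s hs => ?_
    rw [map_mul, map_mul, map_prod, map_prod, ← Zc_eq]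
    have hy : ∀ i : Fin n, algebraMap (MvPolynomial (GVar n r) ℚ) (GF n r)
        (MvPolynomial.X (GVar.y i) ^ ((s : ℤ) * v i).toNat) = Yv (r := r) i ^ ((s : ℤ) * v i) :=
      fun i => algX_pow_toNat _ _ (mul_nonneg (by positivity) (hv0 i))
    have hx : ∀ j : Fin n, algebraMap (MvPolynomial (GVar n r) ℚ) (GF n r)
        (MvPolynomial.X (GVar.x j) ^ ((N j : ℤ) + s * w j).toNat)
          = Xv (r := r) j ^ ((N j : ℤ) + s * w j) :=
      fun j => algX_pow_toNat _ _ (hNE s hs j)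
    simp only [hy, hx]
    rw [yhatpow_eq]
    have hMs : (((∏ i, Yv (r := r) i ^ v i) * ∏ j, Xv (r := r) j ^ w j) ^ s)
        = (∏ i, Yv (r := r) i ^ ((s : ℤ) * v i)) * ∏ j, Xv (r := r) j ^ ((s : ℤ) * w j) := by
      rw [mul_pow, ← Finset.prod_pow, ← Finset.prod_pow]
      congr 1
      · refine Finset.prod_congr rfl fun i _ => ?_
        rw [← zpow_natCast (Yv (r := r) i ^ v i) s, ← zpow_mul, mul_comm]
      · refine Finset.prod_congr rfl fun j _ => ?_
        rw [← zpow_natCast (Xv (r := r) j ^ w j) s, ← zpow_mul, mul_comm]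
    rw [hMs]
    have hxadd : ∀ j : Fin n, Xv (r := r) j ^ ((N j : ℤ) + s * w j)
        = Xv (r := r) j ^ (N j : ℤ) * Xv (r := r) j ^ ((s : ℤ) * w j) :=
      fun j => zpow_add₀ (Xv_ne_zero j) _ _
    simp only [hxadd, Finset.prod_mul_distrib]
    ring
  have claim2 : MvPolynomial.eval (evalF n r) A = 1 := by
    rw [hA, map_sum]
    rw [Finset.sum_eq_single_of_mem 0 (Finset.mem_range.mpr (by omega))]
    · have h0 : Zp r k 0 = 1 := by unfold Zp; rw [dif_neg]; omega
      simp [h0, evalF, MvPolynomial.eval_prod]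
    · intro s hs hs0
      rw [map_mul, map_mul]
      have hy0 : MvPolynomial.eval (evalF n r)
          (∏ i, MvPolynomial.X (GVar.y i) ^ ((s : ℤ) * v i).toNat) = 0 := by
        rw [MvPolynomial.eval_prod]
        refine Finset.prod_eq_zero (Finset.mem_univ i₀) ?_
        rw [map_pow, MvPolynomial.eval_X]
        have hpos : 0 < (s : ℤ) * v i₀ :=
          mul_pos (by exact_mod_cast Nat.pos_of_ne_zero hs0)
            (lt_of_le_of_ne (hv0 i₀) (Ne.symm hi₀))
        exact zero_pow (by omega)
      rw [hy0, mul_zero, zero_mul]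
  intro hP
  rw [hP, mul_zero] at claim1
  have hA0 : A = 0 := algMap_injective (by rw [claim1, map_zero])
  rw [hA0, map_zero] at claim2
  exact zero_ne_one claim2

end Aux2

/-- For all `1 ≤ p ≤ l ≤ K`, the elements `L_j` are nonzero and
`q^{(p)}(ŷ^{c_l⁺}) = ŷ^{c_l⁺}·∏_{j=1}^{p} L_j^{-(ĉ_l⁺, d_{(j)}·c_j)_{D₀R}}`. -/
theorem stmt_12 (n K : ℕ) (hn : 1 ≤ n) (r : Fin n → ℕ) (hr : ∀ i, 0 < r i)
    (B₀ : Matrix (Fin n) (Fin n) ℤ)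
    (D₀ : Fin n → ℤ) (hD₀ : ∀ i, 0 < D₀ i)
    (hskew : ∀ i j, D₀ i * (r i : ℤ) * B₀ i j = -(D₀ j * (r j : ℤ) * B₀ j i))
    (idx : ℕ → Fin n) (ε : ℕ → ℤ)
    (hε : ∀ j < K, ε (j + 1) = 1 ∨ ε (j + 1) = -1)
    (B C : ℕ → Matrix (Fin n) (Fin n) ℤ)
    (hB0 : B 0 = B₀) (hC0 : C 0 = 1)
    -- at each step the c-vector is nonzero and sign-coherent with common sign ε_j
    (hcv : ∀ j < K, (∃ l, C j l (idx (j + 1)) ≠ 0) ∧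
      ∀ l, 0 ≤ ε (j + 1) * C j l (idx (j + 1)))
    (hB : ∀ j < K, ∀ (a b : Fin n),
      B (j + 1) a b =
        if a = idx (j + 1) ∨ b = idx (j + 1) then -(B j a b)
        else B j a b + (r (idx (j + 1)) : ℤ) *
          (max (-(B j a (idx (j + 1)))) 0 * B j (idx (j + 1)) b
            + B j a (idx (j + 1)) * max (B j (idx (j + 1)) b) 0))
    (hC : ∀ j < K, ∀ (a b : Fin n),
      C (j + 1) a b =
        if b = idx (j + 1) then -(C j a b)
        else C j a b + (r (idx (j + 1)) : ℤ) *
          (C j a (idx (j + 1)) * max (ε (j + 1) * B j (idx (j + 1)) b) 0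
            + max (-(ε (j + 1) * C j a (idx (j + 1)))) 0 * B j (idx (j + 1)) b))
    -- the rational numbers h_{i,j} = (e_i, d_{(j)}·c_j)_{D₀R} are integers
    (hfun : ℕ → Fin n → ℤ)
    (hfunint : ∀ j < K, ∀ i,
      hfun (j + 1) i * (D₀ (idx (j + 1)) * (r (idx (j + 1)) : ℤ)) =
        D₀ i * (r i : ℤ) * C j i (idx (j + 1)))
    (q : ℕ → (GF n r →+* GF n r))
    (hq0 : ∀ j < K, ∀ a : ℚ, q (j + 1) (Qc a) = Qc a)
    (hqy : ∀ j < K, ∀ i, q (j + 1) (Yv i) = Yv i)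
    (hqz : ∀ j < K, ∀ i s, q (j + 1) (Zv i s) = Zv i s)
    (hqx : ∀ j < K, ∀ i, q (j + 1) (Xv i) =
      Xv i * (∑ s ∈ Finset.range (r (idx (j + 1)) + 1),
        Zc r (idx (j + 1)) s *
          yhatpow r B₀ (fun m => ε (j + 1) * C j m (idx (j + 1))) ^ s) ^ (-(hfun (j + 1) i)))
    (Q : ℕ → (GF n r →+* GF n r))
    (hQ0 : Q 0 = RingHom.id _)
    (hQ : ∀ j < K, Q (j + 1) = (Q j).comp (q (j + 1)))
    -- the rational numbers (ĉ_l⁺, d_{(j)}·c_j)_{D₀R} are integers `e l j`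
    (e : ℕ → ℕ → ℤ)
    (he : ∀ l, 1 ≤ l → l ≤ K → ∀ j, 1 ≤ j → j ≤ l →
      e l j * (D₀ (idx j) * (r (idx j) : ℤ)) =
        ∑ m, B₀.mulVec (fun i => ε l * C (l - 1) i (idx l)) m *
          (D₀ m * (r m : ℤ)) * C (j - 1) m (idx j))
    (L : ℕ → GF n r)
    (hL1 : L 1 = ∑ s ∈ Finset.range (r (idx 1) + 1),
      Zc r (idx 1) s * yhatpow r B₀ (fun i => ε 1 * C 0 i (idx 1)) ^ s)
    (hLl : ∀ l, 2 ≤ l → l ≤ K → L l = ∑ s ∈ Finset.range (r (idx l) + 1),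
      Zc r (idx l) s * (yhatpow r B₀ (fun i => ε l * C (l - 1) i (idx l)) *
        ∏ j ∈ Finset.Icc 1 (l - 1), L j ^ (-(e l j))) ^ s)
    : (∀ j, 1 ≤ j → j ≤ K → L j ≠ 0) ∧
    ∀ p l, 1 ≤ p → p ≤ l → l ≤ K →
      Q p (yhatpow r B₀ (fun i => ε l * C (l - 1) i (idx l))) =
        yhatpow r B₀ (fun i => ε l * C (l - 1) i (idx l)) *
          ∏ j ∈ Finset.Icc 1 p, L j ^ (-(e l j)) := by
  classical
  -- Q p fixes the z-variables
  have hQZv : ∀ p, p ≤ K → ∀ (i : Fin n) (s : Fin (r i - 1)), Q p (Zv i s) = Zv i s := by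
    intro p
    induction p with
    | zero => intro _ i s; rw [hQ0, RingHom.id_apply]
    | succ p ih =>
      intro hp i s
      rw [hQ p (by omega), RingHom.comp_apply, hqz p (by omega), ih (by omega)]
  have hQZc : ∀ p, p ≤ K → ∀ (k : Fin n) (s : ℕ), Q p (Zc r k s) = Zc r k s := by
    intro p hp k s
    unfold Zc
    split
    · exact hQZv p hp _ _
    · exact map_one _
  have key : ∀ p, p ≤ K →
      (∀ j, 1 ≤ j → j ≤ p → L j ≠ 0) ∧
      ∀ l, p ≤ l → l ≤ K →
        Q p (yhatpow r B₀ (fun i => ε l * C (l - 1) i (idx l))) =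
          yhatpow r B₀ (fun i => ε l * C (l - 1) i (idx l)) *
            ∏ j ∈ Finset.Icc 1 p, L j ^ (-(e l j)) := by
    intro p
    induction p with
    | zero =>
      refine fun _ => ⟨fun j h1 h2 => absurd h2 (by omega), fun l hl1 hl2 => ?_⟩
      rw [hQ0, RingHom.id_apply, Finset.Icc_eq_empty (by omega), Finset.prod_empty,
        mul_one]
    | succ p ih =>
      intro hpK
      obtain ⟨ihnz, ihq⟩ := ih (by omega)
      set P : GF n r := ∑ s ∈ Finset.range (r (idx (p + 1)) + 1),
        Zc r (idx (p + 1)) s *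
          yhatpow r B₀ (fun m => ε (p + 1) * C p m (idx (p + 1))) ^ s with hPdef
      have hvp0 : ∀ m, 0 ≤ ε (p + 1) * C p m (idx (p + 1)) := (hcv p (by omega)).2
      obtain ⟨m₀, hm₀⟩ := (hcv p (by omega)).1
      have hvpne : ε (p + 1) * C p m₀ (idx (p + 1)) ≠ 0 := by
        rcases hε p (by omega) with h | h <;> rw [h] <;> simpa using hm₀
      have hPne : P ≠ 0 := by
        rw [hPdef]
        exact sumP_ne_zero B₀ (idx (p + 1)) (hr _) _ hvp0 m₀ hvpne
      -- action of q (p+1) on yhatpow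
      have hqx'' : ∀ i, q (p + 1) (Xv i) = Xv (r := r) i * P ^ (-(hfun (p + 1) i)) :=
        fun i => hqx p (by omega) i
      have hq_yhat : ∀ v : Fin n → ℤ,
          q (p + 1) (yhatpow r B₀ v) =
            yhatpow r B₀ v * P ^ (-(∑ m, B₀.mulVec v m * hfun (p + 1) m)) := by
        intro v
        have hqy' : ∀ i : Fin n, q (p + 1) (Yv (r := r) i ^ v i) = Yv (r := r) i ^ v i := by
          intro i
          rw [map_zpow₀, hqy p (by omega)]
        have hfac : ∀ j : Fin n, q (p + 1) (Xv (r := r) j ^ B₀.mulVec v j)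
            = Xv (r := r) j ^ B₀.mulVec v j *
              P ^ (-(B₀.mulVec v j * hfun (p + 1) j)) := by
          intro j
          rw [map_zpow₀, hqx'' j, mul_zpow, ← zpow_mul,
            show -hfun (p + 1) j * B₀.mulVec v j = -(B₀.mulVec v j * hfun (p + 1) j) from by
              ring]
        rw [yhatpow_eq, map_mul, map_prod, map_prod]
        simp only [hqy', hfac]
        rw [Finset.prod_mul_distrib, ← mul_assoc, ← yhatpow_eq]
        congr 1
        rw [← zpow_sum₀ hPne]
        congr 1
        rw [Finset.sum_neg_distrib]
      have hexp : ∀ l, p + 1 ≤ l → l ≤ K →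
          (∑ m, B₀.mulVec (fun i => ε l * C (l - 1) i (idx l)) m * hfun (p + 1) m)
            = e l (p + 1) := by
        intro l h1 h2
        have hD : (D₀ (idx (p + 1)) * (r (idx (p + 1)) : ℤ)) ≠ 0 := by
          have h5 := hD₀ (idx (p + 1))
          have h6 := hr (idx (p + 1))
          positivity
        refine mul_right_cancel₀ hD ?_
        rw [Finset.sum_mul, he l (by omega) h2 (p + 1) (by omega) (by omega)]
        simp only [Nat.add_sub_cancel]
        refine Finset.sum_congr rfl fun m _ => ?_
        have h7 := hfunint p (by omega) m
        linear_combination (B₀.mulVec (fun i => ε l * C (l - 1) i (idx l)) m) * h7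
      have step : ∀ l, p + 1 ≤ l → l ≤ K →
          q (p + 1) (yhatpow r B₀ (fun i => ε l * C (l - 1) i (idx l))) =
            yhatpow r B₀ (fun i => ε l * C (l - 1) i (idx l)) * P ^ (-(e l (p + 1))) := by
        intro l h1 h2
        rw [hq_yhat, hexp l h1 h2]
      have hQpP : Q p P = L (p + 1) := by
        have base := ihq (p + 1) (by omega) (by omega)
        simp only [Nat.add_sub_cancel] at base
        rw [hPdef, map_sum]
        rcases Nat.eq_zero_or_pos p with hp0 | hp1
        · subst hp0
          simp only [zero_add] at base ⊢
          rw [hL1]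
          refine Finset.sum_congr rfl fun s hs => ?_
          rw [map_mul, map_pow, hQZc 0 (by omega) _ _, base,
            Finset.Icc_eq_empty (by omega : ¬(1:ℕ) ≤ 0), Finset.prod_empty, mul_one]
        · have hL' := hLl (p + 1) (by omega) (by omega)
          simp only [Nat.add_sub_cancel] at hL'
          rw [hL']
          refine Finset.sum_congr rfl fun s hs => ?_
          rw [map_mul, map_pow, hQZc p (by omega) _ _, base]
      refine ⟨?_, ?_⟩
      · intro j h1 h2
        rcases Nat.lt_or_ge j (p + 1) with h | h
        · exact ihnz j h1 (by omega)
        · have hj : j = p + 1 := by omega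
          subst hj
          rw [← hQpP]
          exact (map_ne_zero_iff (Q p) (RingHom.injective (Q p))).mpr hPne
      · intro l h1 h2
        rw [hQ p (by omega), RingHom.comp_apply, step l h1 h2, map_mul, map_zpow₀,
          hQpP, ihq l (by omega) h2, Finset.prod_Icc_succ_top (by omega), mul_assoc]
  refine ⟨(key K le_rfl).1, fun p l hp hpl hlK => (key p (by omega)).2 l hpl hlK⟩
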